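/- Let S = {x ∈ ℝ^m : x_j ≥ 0 for all j, Σ_j x_j = 1} be the probability simplex. For any z ∈ ℝ^m, the Euclidean projection of z onto S has the form P_S(z) = ReLU(z + b·1) for some scalar b ∈ ℝ, where ReLU is applied entrywise and 1 is the all-ones vector; moreover b is the unique scalar such that Σ_j max(z_j + b, 0) = 1. -/

import Mathlib

theorem stmt_8 {m : ℕ} (hm : 0 < m) (z p : EuclideanSpace ℝ (Fin m))
    (hp : ((∀ j, 0 ≤ p j) ∧ ∑ j, p j = 1) ∧
      ∀ q : EuclideanSpace ℝ (Fin m), ((∀ j, 0 ≤ q j) ∧ ∑ j, q j = 1) →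
        ‖p - z‖ ≤ ‖q - z‖) :
    ∃ b : ℝ, (∀ j, p j = max (z j + b) 0) ∧ (∑ j, max (z j + b) 0 = 1) ∧
      ∀ b' : ℝ, (∑ j, max (z j + b') 0 = 1) → b' = b := by
  obtain ⟨⟨hpos, hsum⟩, hmin⟩ := hp
  -- reformulate minimality in terms of sum of squares
  have hF : ∀ q : EuclideanSpace ℝ (Fin m), (∀ j, 0 ≤ q j) → (∑ j, q j = 1) →
      ∑ j, (p j - z j) ^ 2 ≤ ∑ j, (q j - z j) ^ 2 := by
    intro q hq1 hq2
    have h := hmin q ⟨hq1, hq2⟩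
    have h1 : ‖p - z‖ ^ 2 ≤ ‖q - z‖ ^ 2 := by
      exact pow_le_pow_left₀ (norm_nonneg _) h 2
    rw [EuclideanSpace.norm_eq, EuclideanSpace.norm_eq,
      Real.sq_sqrt (by positivity), Real.sq_sqrt (by positivity)] at h1
    simpa [Real.norm_eq_abs, sq_abs] using h1
  -- key variational inequality
  have key : ∀ i j, 0 < p i → p i - z i ≤ p j - z j := by
    intro i j hpi
    by_cases hij : i = j
    · subst hij; exact le_rfl
    by_contra hlt
    push_neg at hlt
    have hd : p j - z j - (p i - z i) < 0 := by linarith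
    have hstep : ∀ ε : ℝ, 0 < ε → ε ≤ p i → -ε ≤ p j - z j - (p i - z i) := by
      intro ε hε hεpi
      set q : EuclideanSpace ℝ (Fin m) :=
        WithLp.toLp 2 (fun k => if k = i then p i - ε else if k = j then p j + ε else p k) with hq
      have hqi : q i = p i - ε := by simp [hq]
      have hqj : q j = p j + ε := by simp [hq, hij, Ne.symm hij]
      have hqk : ∀ k, k ≠ i → k ≠ j → q k = p k := by
        intro k h1 h2; simp [hq, h1, h2]
      have hq1 : ∀ k, 0 ≤ q k := by
        intro k
        by_cases h1 : k = i
        · rw [h1, hqi]; linarith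
        by_cases h2 : k = j
        · rw [h2, hqj]; have := hpos j; linarith
        · rw [hqk k h1 h2]; exact hpos k
      have hq2 : ∑ k, q k = 1 := by
        have : ∑ k, q k = ∑ k, p k := by
          have hdiff : ∑ k, (q k - p k) = 0 := by
            rw [← Finset.sum_subset (Finset.subset_univ ({i, j} : Finset (Fin m)))
              (by intro k _ hk; simp only [Finset.mem_insert, Finset.mem_singleton] at hk
                  push_neg at hk
                  rw [hqk k hk.1 hk.2]; ring)]
            rw [Finset.sum_pair hij, hqi, hqj]; ring
          have := Finset.sum_sub_distrib (f := q) (g := p) (s := Finset.univ)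
          linarith [this ▸ hdiff]
        rw [this, hsum]
      have hle := hF q hq1 hq2
      have hdiff : ∑ k, ((q k - z k) ^ 2 - (p k - z k) ^ 2) =
          ((q i - z i) ^ 2 - (p i - z i) ^ 2) + ((q j - z j) ^ 2 - (p j - z j) ^ 2) := by
        rw [← Finset.sum_subset (Finset.subset_univ ({i, j} : Finset (Fin m)))
          (by intro k _ hk; simp only [Finset.mem_insert, Finset.mem_singleton] at hk
              push_neg at hk
              rw [hqk k hk.1 hk.2]; ring)]
        rw [Finset.sum_pair hij]
      rw [Finset.sum_sub_distrib] at hdiff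
      rw [hqi, hqj] at hdiff
      nlinarith [hdiff, hle, hε]
    have hε0 : 0 < min (p i) (-(p j - z j - (p i - z i)) / 2) := by
      apply lt_min hpi; linarith
    have h1 := hstep _ hε0 (min_le_left _ _)
    have h2 : min (p i) (-(p j - z j - (p i - z i)) / 2) ≤
        -(p j - z j - (p i - z i)) / 2 := min_le_right _ _
    linarith
  -- find a positive coordinate
  have : ∃ i, 0 < p i := by
    by_contra h
    push_neg at h
    have : ∀ i ∈ Finset.univ, p i = 0 := fun i _ => le_antisymm (h i) (hpos i)
    rw [Finset.sum_congr rfl this] at hsum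
    simp at hsum
  obtain ⟨i₀, hi₀⟩ := this
  refine ⟨p i₀ - z i₀, ?_, ?_, ?_⟩
  · intro j
    rcases (hpos j).lt_or_eq with hj | hj
    · have h1 := key i₀ j hi₀
      have h2 := key j i₀ hj
      have : p j = z j + (p i₀ - z i₀) := by linarith
      rw [this, max_eq_left (by linarith)]
    · have h1 := key i₀ j hi₀
      rw [← hj, max_eq_right (by linarith)]
  · rw [show (∑ j, max (z j + (p i₀ - z i₀)) 0) = ∑ j, p j from
      Finset.sum_congr rfl fun j _ => by
        rcases (hpos j).lt_or_eq with hj | hj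
        · have h1 := key i₀ j hi₀
          have h2 := key j i₀ hj
          rw [max_eq_left (by linarith)]; linarith
        · have h1 := key i₀ j hi₀
          rw [max_eq_right (by linarith)]; linarith, hsum]
  · intro b' hb'
    by_contra hne
    have hform : ∀ j, p j = max (z j + (p i₀ - z i₀)) 0 := by
      intro j
      rcases (hpos j).lt_or_eq with hj | hj
      · have h1 := key i₀ j hi₀
        have h2 := key j i₀ hj
        rw [max_eq_left (by linarith)]; linarith
      · have h1 := key i₀ j hi₀
        rw [max_eq_right (by linarith)]; linarith
    have hsum1 : ∑ j, max (z j + (p i₀ - z i₀)) 0 = 1 := by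
      rw [show (∑ j, max (z j + (p i₀ - z i₀)) 0) = ∑ j, p j from
        Finset.sum_congr rfl fun j _ => (hform j).symm, hsum]
    rcases lt_or_gt_of_ne hne with h | h
    · have hlt : ∑ j, max (z j + b') 0 < ∑ j, max (z j + (p i₀ - z i₀)) 0 := by
        apply Finset.sum_lt_sum
        · intro j _; exact max_le_max (by linarith) le_rfl
        · refine ⟨i₀, Finset.mem_univ _, ?_⟩
          have hmax : max (z i₀ + (p i₀ - z i₀)) 0 = p i₀ := by
            rw [max_eq_left (by linarith)]; ring
          rw [hmax]
          exact max_lt (by linarith) hi₀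
      rw [hb', hsum1] at hlt; exact lt_irrefl _ hlt
    · have hlt : ∑ j, max (z j + (p i₀ - z i₀)) 0 < ∑ j, max (z j + b') 0 := by
        apply Finset.sum_lt_sum
        · intro j _; exact max_le_max (by linarith) le_rfl
        · refine ⟨i₀, Finset.mem_univ _, ?_⟩
          have hmax : max (z i₀ + (p i₀ - z i₀)) 0 = p i₀ := by
            rw [max_eq_left (by linarith)]; ring
          rw [hmax]
          have : p i₀ < z i₀ + b' := by linarith
          exact lt_max_of_lt_left this
      rw [hb', hsum1] at hlt; exact lt_irrefl _ hlt
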